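/- If a measurable function L : (0,∞) → (0,∞) satisfies |1 - L(tr)/L(r)| ≤ C g(r) h_τ(t) for all t ≥ 1 and sufficiently large r (where g(r) → 0 as r → ∞), then for any positive integer k and any δ > 0 there exists C' such that |1 - L^{k/2}(tr)/L^{k/2}(r)| ≤ C' g(r) h_τ(t) t^δ for all t ≥ 1 and sufficiently large r. -/
import Mathlib


open Filter Real

/-- `h_τ(t) = ln t` if `τ = 0` and `(t^τ - 1)/τ` otherwise. -/
noncomputable def htau (tau t : ℝ) : ℝ :=
  if tau = 0 then Real.log t else (t ^ tau - 1) / tau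

lemma htau_nonneg {tau : ℝ} (h : tau ≤ 0) {t : ℝ} (ht : 1 ≤ t) : 0 ≤ htau tau t := by
  unfold htau
  split_ifs with h0
  · exact Real.log_nonneg ht
  · have htn : tau < 0 := lt_of_le_of_ne h h0
    have h1 : t ^ tau ≤ 1 := Real.rpow_le_one_of_one_le_of_nonpos ht h
    rw [div_nonneg_iff]
    right
    constructor <;> linarith

lemma aux_bound (C δ tau : ℝ) (hC : 0 < C) (hδ : 0 < δ) (h : tau ≤ 0) (m : ℕ) :
    ∃ D : ℝ, 0 < D ∧ ∀ t : ℝ, 1 ≤ t → (1 + C * htau tau t) ^ m ≤ D * t ^ δ := by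
  rcases Nat.eq_zero_or_pos m with hm | hm
  · refine ⟨1, one_pos, fun t ht => ?_⟩
    simp only [hm, pow_zero, one_mul]
    exact Real.one_le_rpow ht hδ.le
  by_cases h0 : tau = 0
  · set ε : ℝ := δ / m with hε
    have hεpos : 0 < ε := div_pos hδ (by exact_mod_cast hm)
    refine ⟨(1 + C / ε) ^ m, by positivity, fun t ht => ?_⟩
    have ht0 : (0:ℝ) < t := by linarith
    rw [show htau tau t = Real.log t from by simp [htau, h0]]
    have hlog : Real.log t ≤ t ^ ε / ε := Real.log_le_rpow_div ht0.le hεpos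
    have htε : 1 ≤ t ^ ε := Real.one_le_rpow ht hεpos.le
    have hC2 : C * Real.log t ≤ C / ε * t ^ ε := by
      calc C * Real.log t ≤ C * (t ^ ε / ε) := mul_le_mul_of_nonneg_left hlog hC.le
        _ = C / ε * t ^ ε := by ring
    have hCε : 0 < C / ε := div_pos hC hεpos
    have h1 : 1 + C * Real.log t ≤ (1 + C / ε) * t ^ ε := by nlinarith
    have h2 : (1 + C * Real.log t) ^ m ≤ ((1 + C / ε) * t ^ ε) ^ m := by
      apply pow_le_pow_left₀ _ h1
      nlinarith [Real.log_nonneg ht]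
    calc (1 + C * Real.log t) ^ m ≤ ((1 + C / ε) * t ^ ε) ^ m := h2
      _ = (1 + C / ε) ^ m * (t ^ ε) ^ m := mul_pow _ _ _
      _ = (1 + C / ε) ^ m * t ^ δ := by
          rw [← Real.rpow_natCast (t ^ ε) m, ← Real.rpow_mul ht0.le]
          congr 1
          rw [hε]
          field_simp
  · have htn : tau < 0 := lt_of_le_of_ne h h0
    have hτpos : 0 < (-tau)⁻¹ := inv_pos.mpr (by linarith)
    have hD : 0 < (1 + C * (-tau)⁻¹) ^ m := by positivity
    refine ⟨(1 + C * (-tau)⁻¹) ^ m, hD, fun t ht => ?_⟩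
    have ht0 : (0:ℝ) < t := by linarith
    have hb : htau tau t ≤ (-tau)⁻¹ := by
      simp only [htau, if_neg h0]
      rw [div_le_iff_of_neg htn]
      have h2 : 0 ≤ t ^ tau := Real.rpow_nonneg ht0.le tau
      have hne : tau ≠ 0 := ne_of_lt htn
      have e : (-tau)⁻¹ * tau = -1 := by field_simp
      rw [e]
      linarith
    have h1 : (1 + C * htau tau t) ^ m ≤ (1 + C * (-tau)⁻¹) ^ m := by
      apply pow_le_pow_left₀
      · have := htau_nonneg h ht; positivity
      · nlinarith
    have htδ : 1 ≤ t ^ δ := Real.one_le_rpow ht hδ.le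
    calc (1 + C * htau tau t) ^ m ≤ (1 + C * (-tau)⁻¹) ^ m := h1
      _ ≤ (1 + C * (-tau)⁻¹) ^ m * t ^ δ := le_mul_of_one_le_right hD.le htδ

/-- If `|1 - L(tr)/L(r)| ≤ C g(r) h_τ(t)` for all `t ≥ 1` and sufficiently large `r`,
where `g → 0` at infinity and `g` is regularly varying with index `τ ≤ 0`, and `L` is a
locally bounded positive slowly varying function, then for every positive integer `k` and
every `δ > 0` there is `C'` such that
`|1 - L^{k/2}(tr)/L^{k/2}(r)| ≤ C' g(r) h_τ(t) t^δ` for all `t ≥ 1` and sufficiently large `r`. -/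
theorem slowly_varying_power_remainder (L g : ℝ → ℝ) (tau : ℝ) (htau_nonpos : tau ≤ 0)
    (hLpos : ∀ x : ℝ, 0 < x → 0 < L x)
    (hLmeas : Measurable L)
    (hLsv : ∀ t : ℝ, 0 < t → Tendsto (fun lam : ℝ => L (lam * t) / L lam) atTop (nhds 1))
    (hgpos : ∀ x : ℝ, 0 < x → 0 < g x)
    (hgrv : ∀ t : ℝ, 0 < t → Tendsto (fun lam : ℝ => g (lam * t) / g lam) atTop (nhds (t ^ tau)))
    (hg0 : Tendsto g atTop (nhds 0))
    (C : ℝ) (hC : 0 < C)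
    (hL : ∀ᶠ r : ℝ in atTop, ∀ t : ℝ, 1 ≤ t →
      |1 - L (t * r) / L r| ≤ C * g r * htau tau t) :
    ∀ k : ℕ, 1 ≤ k → ∀ δ : ℝ, 0 < δ → ∃ C' : ℝ, 0 < C' ∧
      ∀ᶠ r : ℝ in atTop, ∀ t : ℝ, 1 ≤ t →
        |1 - (L (t * r)) ^ ((k : ℝ) / 2) / (L r) ^ ((k : ℝ) / 2)|
          ≤ C' * g r * htau tau t * t ^ δ := by
  intro k hk δ hδ
  obtain ⟨D, hD, hDle⟩ := aux_bound C δ tau hC hδ htau_nonpos (k - 1)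
  have hk0 : (0:ℝ) < (k:ℝ) := by exact_mod_cast Nat.lt_of_lt_of_le Nat.zero_lt_one hk
  refine ⟨(k:ℝ) * C * D, by positivity, ?_⟩
  filter_upwards [hL, eventually_gt_atTop 0,
      hg0.eventually (gt_mem_nhds (by norm_num : (0:ℝ) < 1))] with r hr1 hr2 hr3
  intro t ht
  have ht0 : (0:ℝ) < t := lt_of_lt_of_le one_pos ht
  have htr : 0 < t * r := mul_pos ht0 hr2
  have hLr : 0 < L r := hLpos r hr2
  have hLtr : 0 < L (t * r) := hLpos _ htr
  set x := L (t * r) / L r with hxdef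
  have hx : 0 < x := div_pos hLtr hLr
  have hgr : 0 < g r := hgpos r hr2
  have hht : 0 ≤ htau tau t := htau_nonneg htau_nonpos ht
  have hxy : |x - 1| ≤ C * g r * htau tau t := by
    rw [abs_sub_comm]; exact hr1 t ht
  rw [← Real.div_rpow hLtr.le hLr.le]
  have hsq : (x ^ ((k:ℝ)/2)) ^ (2:ℕ) = x ^ k := by
    rw [← Real.rpow_natCast (x ^ ((k:ℝ)/2)) 2, ← Real.rpow_mul hx.le,
      ← Real.rpow_natCast x k]
    norm_num
  have hrp : 0 < x ^ ((k:ℝ)/2) := Real.rpow_pos_of_pos hx _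
  have stepA : |1 - x ^ ((k:ℝ)/2)| ≤ |x ^ k - 1| := by
    have hfac : x ^ k - 1 = (x ^ ((k:ℝ)/2) - 1) * (x ^ ((k:ℝ)/2) + 1) := by
      rw [← hsq]; ring
    rw [hfac, abs_mul, abs_sub_comm]
    have h1 : 1 ≤ |x ^ ((k:ℝ)/2) + 1| := by
      rw [abs_of_pos (by linarith)]; linarith
    nlinarith [abs_nonneg (x ^ ((k:ℝ)/2) - 1)]
  set M : ℝ := 1 + C * htau tau t with hMdef
  have hM1 : (1:ℝ) ≤ M := by nlinarith
  have hxM : x ≤ M := by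
    have h1 : x - 1 ≤ |x - 1| := le_abs_self _
    have h2 : C * g r * htau tau t ≤ C * htau tau t := by nlinarith
    rw [hMdef]; linarith
  have stepB : |x ^ k - 1| ≤ (k:ℝ) * M ^ (k-1) * |x - 1| := by
    rw [← geom_sum_mul x k, abs_mul]
    have hs : |∑ i ∈ Finset.range k, x ^ i| ≤ (k:ℝ) * M ^ (k-1) := by
      rw [abs_of_nonneg (Finset.sum_nonneg fun i _ => pow_nonneg hx.le i)]
      calc ∑ i ∈ Finset.range k, x ^ i
          ≤ ∑ _i ∈ Finset.range k, M ^ (k-1) := by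
            refine Finset.sum_le_sum fun i hi => ?_
            calc x ^ i ≤ M ^ i := pow_le_pow_left₀ hx.le hxM i
              _ ≤ M ^ (k-1) :=
                pow_le_pow_right₀ hM1 (Nat.le_sub_one_of_lt (Finset.mem_range.mp hi))
        _ = (k:ℝ) * M ^ (k-1) := by
            rw [Finset.sum_const, Finset.card_range, nsmul_eq_mul]
    exact mul_le_mul_of_nonneg_right hs (abs_nonneg _)
  have hDt : M ^ (k-1) ≤ D * t ^ δ := hDle t ht
  calc |1 - x ^ ((k:ℝ)/2)| ≤ |x ^ k - 1| := stepA
    _ ≤ (k:ℝ) * M ^ (k-1) * |x - 1| := stepB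
    _ ≤ (k:ℝ) * (D * t ^ δ) * (C * g r * htau tau t) := by
        have h1 : (0:ℝ) ≤ M ^ (k-1) := by positivity
        have h2 : (0:ℝ) ≤ |x - 1| := abs_nonneg _
        have h3 : (0:ℝ) ≤ (k:ℝ) * (D * t ^ δ) := by positivity
        nlinarith [mul_le_mul (mul_le_mul_of_nonneg_left hDt hk0.le) hxy h2
          (by positivity : (0:ℝ) ≤ (k:ℝ) * (D * t ^ δ))]
    _ = (k:ℝ) * C * D * g r * htau tau t * t ^ δ := by ring
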